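/- Let Ax be a set of L-formulas and let Γ be a prime theory (w.r.t. Ax) such that ◇φ ∉ Γ. Then there exists a set U of prime theories such that (Γ, U) is a segment and φ ∉ Δ for all Δ ∈ U. -/

import Mathlib

/-- Formulas of the modal language L. -/
inductive Form : Type
  | var : ℕ → Form
  | bot : Form
  | and : Form → Form → Form
  | or : Form → Form → Form
  | imp : Form → Form → Form
  | box : Form → Form
  | dia : Form → Form

namespace Form

/-- Negation abbreviation: ¬φ := φ → ⊥. -/
def neg (φ : Form) : Form := φ.imp bot

/-- Uniform substitution. -/
def subst (σ : ℕ → Form) : Form → Form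
  | var p => σ p
  | bot => bot
  | and a b => and (a.subst σ) (b.subst σ)
  | or a b => or (a.subst σ) (b.subst σ)
  | imp a b => imp (a.subst σ) (b.subst σ)
  | box a => box (a.subst σ)
  | dia a => dia (a.subst σ)

end Form

/-- Substitution instances of the axioms of a standard Hilbert axiomatisation
of intuitionistic propositional logic (the axioms are schematic, so all
substitution instances are included). -/
inductive IPLAx : Form → Prop
  | a1 (φ ψ : Form) : IPLAx (φ.imp (ψ.imp φ))
  | a2 (φ ψ χ : Form) : IPLAx ((φ.imp (ψ.imp χ)).imp ((φ.imp ψ).imp (φ.imp χ)))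
  | a3 (φ ψ : Form) : IPLAx ((φ.and ψ).imp φ)
  | a4 (φ ψ : Form) : IPLAx ((φ.and ψ).imp ψ)
  | a5 (φ ψ : Form) : IPLAx (φ.imp (ψ.imp (φ.and ψ)))
  | a6 (φ ψ : Form) : IPLAx (φ.imp (φ.or ψ))
  | a7 (φ ψ : Form) : IPLAx (ψ.imp (φ.or ψ))
  | a8 (φ ψ χ : Form) : IPLAx ((φ.imp χ).imp ((ψ.imp χ).imp ((φ.or ψ).imp χ)))
  | a9 (φ : Form) : IPLAx (Form.bot.imp φ)

/-- Substitution instances of K_□ : □(φ→ψ) → (□φ → □ψ). -/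
def KBoxAx (χ : Form) : Prop :=
  ∃ φ ψ : Form, χ = ((φ.imp ψ).box).imp ((φ.box).imp (ψ.box))

/-- Substitution instances of K_◇ : □(φ→ψ) → (◇φ → ◇ψ). -/
def KDiaAx (χ : Form) : Prop :=
  ∃ φ ψ : Form, χ = ((φ.imp ψ).box).imp ((φ.dia).imp (ψ.dia))

/-- Axiom instances available in the calculus CK ⊕ Ax : instances of IPL
axioms, of K_□, of K_◇, or substitution instances of members of Ax. -/
def AxInst (Ax : Set Form) (φ : Form) : Prop :=
  IPLAx φ ∨ KBoxAx φ ∨ KDiaAx φ ∨ ∃ ψ ∈ Ax, ∃ σ : ℕ → Form, φ = ψ.subst σ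

/-- The generalised Hilbert calculus CK ⊕ Ax deriving consecutions Γ ⊢_Ax φ:
rules (Ax), (MP), (Nec) and (El). -/
inductive Prv (Ax : Set Form) : Set Form → Form → Prop
  | ax {Γ : Set Form} {φ : Form} : AxInst Ax φ → Prv Ax Γ φ
  | mp {Γ : Set Form} {φ ψ : Form} : Prv Ax Γ φ → Prv Ax Γ (φ.imp ψ) → Prv Ax Γ ψ
  | nec {Γ : Set Form} {φ : Form} : Prv Ax ∅ φ → Prv Ax Γ φ.box
  | el {Γ : Set Form} {φ : Form} : φ ∈ Γ → Prv Ax Γ φ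

/-- A theory: a deductively closed set of formulas. -/
def Theory (Ax : Set Form) (Γ : Set Form) : Prop := ∀ φ : Form, Prv Ax Γ φ → φ ∈ Γ

/-- A set of formulas is prime if φ∨ψ ∈ Γ implies φ ∈ Γ or ψ ∈ Γ. -/
def PrimeSet (Γ : Set Form) : Prop := ∀ φ ψ : Form, φ.or ψ ∈ Γ → φ ∈ Γ ∨ ψ ∈ Γ

/-- A prime theory (possibly inconsistent). -/
def PrimeTheory (Ax : Set Form) (Γ : Set Form) : Prop := Theory Ax Γ ∧ PrimeSet Γ

/-- (Γ, U) is a segment: Γ is a prime theory, U a set of prime theories,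
□φ ∈ Γ implies φ ∈ Δ for all Δ ∈ U, and ◇φ ∈ Γ implies φ ∈ Δ for some Δ ∈ U. -/
def IsSegment (Ax : Set Form) (Γ : Set Form) (U : Set (Set Form)) : Prop :=
  PrimeTheory Ax Γ ∧ (∀ Δ ∈ U, PrimeTheory Ax Δ) ∧
  (∀ φ : Form, φ.box ∈ Γ → ∀ Δ ∈ U, φ ∈ Δ) ∧
  (∀ φ : Form, φ.dia ∈ Γ → ∃ Δ ∈ U, φ ∈ Δ)

section Aux
variable {Ax : Set Form}

theorem Prv.mono {Γ : Set Form} {φ : Form} (h : Prv Ax Γ φ) :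
    ∀ {Γ' : Set Form}, Γ ⊆ Γ' → Prv Ax Γ' φ := by
  induction h with
  | ax h => exact fun _ => Prv.ax h
  | mp _ _ ih1 ih2 => exact fun hs => Prv.mp (ih1 hs) (ih2 hs)
  | nec h => exact fun _ => Prv.nec h
  | el h => exact fun hs => Prv.el (hs h)

theorem Prv.imp_self (Γ : Set Form) (φ : Form) : Prv Ax Γ (φ.imp φ) := by
  have a2 : Prv Ax Γ ((φ.imp ((φ.imp φ).imp φ)).imp ((φ.imp (φ.imp φ)).imp (φ.imp φ))) :=
    Prv.ax (Or.inl (IPLAx.a2 φ (φ.imp φ) φ))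
  have a1 : Prv Ax Γ (φ.imp ((φ.imp φ).imp φ)) := Prv.ax (Or.inl (IPLAx.a1 φ (φ.imp φ)))
  have a1' : Prv Ax Γ (φ.imp (φ.imp φ)) := Prv.ax (Or.inl (IPLAx.a1 φ φ))
  exact Prv.mp a1' (Prv.mp a1 a2)

theorem Prv.weak_imp {Γ : Set Form} {ψ : Form} (χ : Form) (h : Prv Ax Γ ψ) :
    Prv Ax Γ (χ.imp ψ) :=
  Prv.mp h (Prv.ax (Or.inl (IPLAx.a1 ψ χ)))

theorem deduction' {S : Set Form} {ψ : Form} (h : Prv Ax S ψ) :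
    ∀ (Γ : Set Form) (χ : Form), S = insert χ Γ → Prv Ax Γ (χ.imp ψ) := by
  induction h with
  | ax h => intro Γ χ _; exact Prv.weak_imp χ (Prv.ax h)
  | mp _ _ ih1 ih2 =>
      intro Γ χ hS
      have h1 := ih1 Γ χ hS
      have h2 := ih2 Γ χ hS
      exact Prv.mp h1 (Prv.mp h2 (Prv.ax (Or.inl (IPLAx.a2 _ _ _))))
  | nec h => intro Γ χ _; exact Prv.weak_imp χ (Prv.nec h)
  | el h =>
      intro Γ χ hS
      rw [hS] at h
      rcases h with h | h
      · subst h; exact Prv.imp_self Γ _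
      · exact Prv.weak_imp χ (Prv.el h)

theorem deduction {Γ : Set Form} {χ ψ : Form} (h : Prv Ax (insert χ Γ) ψ) :
    Prv Ax Γ (χ.imp ψ) := deduction' h Γ χ rfl

theorem Prv.cut {Γ : Set Form} {χ ψ : Form} (h1 : Prv Ax Γ χ)
    (h2 : Prv Ax (insert χ Γ) ψ) : Prv Ax Γ ψ :=
  Prv.mp h1 (deduction h2)

theorem Prv.finite {Γ : Set Form} {φ : Form} (h : Prv Ax Γ φ) :
    ∃ Γ₀ : Set Form, Γ₀ ⊆ Γ ∧ Γ₀.Finite ∧ Prv Ax Γ₀ φ := by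
  induction h with
  | ax h => exact ⟨∅, by simp, Set.finite_empty, Prv.ax h⟩
  | mp _ _ ih1 ih2 =>
      obtain ⟨A, hA, hAf, hA2⟩ := ih1
      obtain ⟨B, hB, hBf, hB2⟩ := ih2
      exact ⟨A ∪ B, Set.union_subset hA hB, hAf.union hBf,
        Prv.mp (hA2.mono Set.subset_union_left) (hB2.mono Set.subset_union_right)⟩
  | nec h => exact ⟨∅, by simp, Set.finite_empty, Prv.nec h⟩
  | el h => exact ⟨{_}, Set.singleton_subset_iff.2 h, Set.finite_singleton _,
      Prv.el rfl⟩

theorem Prv.boxed {Δ Γ : Set Form} {α : Form} (h : Prv Ax Δ α)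
    (hb : ∀ χ ∈ Δ, Prv Ax Γ χ.box) : Prv Ax Γ α.box := by
  induction h with
  | ax h => exact Prv.nec (Prv.ax h)
  | @mp _ β α _ _ ih1 ih2 =>
      have hk : Prv Ax Γ (((β.imp α).box).imp ((β.box).imp (α.box))) :=
        Prv.ax (Or.inr (Or.inl ⟨β, α, rfl⟩))
      exact Prv.mp (ih1 hb) (Prv.mp (ih2 hb) hk)
  | nec h => exact Prv.nec (Prv.nec h)
  | el h => exact hb _ h

theorem chain_fin {c : Set (Set Form)} (hchain : IsChain (· ⊆ ·) c) (hcne : c.Nonempty)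
    {Γf : Set Form} (hfin : Γf.Finite) : Γf ⊆ ⋃₀ c → ∃ t ∈ c, Γf ⊆ t := by
  refine Set.Finite.induction_on (motive := fun s _ => s ⊆ ⋃₀ c → ∃ t ∈ c, s ⊆ t) _ hfin
    (fun _ => ⟨hcne.choose, hcne.choose_spec, Set.empty_subset _⟩) ?_
  intro x s hxs hsf ih hsub
  obtain ⟨t1, ht1c, ht1⟩ := ih (fun y hy => hsub (Set.mem_insert_of_mem _ hy))
  obtain ⟨t2, ht2c, hxt2⟩ : ∃ t2 ∈ c, x ∈ t2 := by
    simpa [Set.mem_sUnion] using hsub (Set.mem_insert _ _)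
  rcases hchain.total ht1c ht2c with hle | hle
  · exact ⟨t2, ht2c, Set.insert_subset hxt2 (ht1.trans hle)⟩
  · exact ⟨t1, ht1c, Set.insert_subset (hle hxt2) ht1⟩

theorem lindenbaum {Γ₀ : Set Form} {φ : Form} (h : ¬ Prv Ax Γ₀ φ) :
    ∃ Δ : Set Form, Γ₀ ⊆ Δ ∧ PrimeTheory Ax Δ ∧ φ ∉ Δ := by
  set S : Set (Set Form) := {Δ | ¬ Prv Ax Δ φ} with hS
  have hub : ∀ c ⊆ S, IsChain (· ⊆ ·) c → c.Nonempty →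
      ∃ ub ∈ S, ∀ s ∈ c, s ⊆ ub := by
    intro c hcS hchain hcne
    refine ⟨⋃₀ c, ?_, fun s hs => Set.subset_sUnion_of_mem hs⟩
    intro hp
    obtain ⟨Γf, hsubf, hfin, hpf⟩ := Prv.finite hp
    obtain ⟨t, htc, hts⟩ := chain_fin hchain hcne hfin hsubf
    exact hcS htc (hpf.mono hts)
  obtain ⟨Δ, hsub, hmax⟩ := zorn_subset_nonempty S hub Γ₀ h
  have hΔS : ¬ Prv Ax Δ φ := hmax.prop
  have hthy : Theory Ax Δ := by
    intro ψ hψ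
    by_contra hmem
    have hne : ¬ Prv Ax (insert ψ Δ) φ := fun hp => hΔS (Prv.cut hψ hp)
    have := hmax.eq_of_subset hne (Set.subset_insert _ _)
    exact hmem (this ▸ Set.mem_insert ψ Δ)
  refine ⟨Δ, hsub, ⟨hthy, ?_⟩, fun hm => hΔS (Prv.el hm)⟩
  intro α β hor
  by_contra hc
  push_neg at hc
  obtain ⟨ha, hb⟩ := hc
  have hpa : Prv Ax (insert α Δ) φ := by
    by_contra hp
    have := hmax.eq_of_subset hp (Set.subset_insert _ _)
    exact ha (this ▸ Set.mem_insert α Δ)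
  have hpb : Prv Ax (insert β Δ) φ := by
    by_contra hp
    have := hmax.eq_of_subset hp (Set.subset_insert _ _)
    exact hb (this ▸ Set.mem_insert β Δ)
  have h1 : Prv Ax Δ (α.imp φ) := deduction hpa
  have h2 : Prv Ax Δ (β.imp φ) := deduction hpb
  have h8 : Prv Ax Δ ((α.imp φ).imp ((β.imp φ).imp ((α.or β).imp φ))) :=
    Prv.ax (Or.inl (IPLAx.a8 α β φ))
  exact hΔS (Prv.mp (Prv.el hor) (Prv.mp h2 (Prv.mp h1 h8)))

end Aux

/-- If Γ is a prime theory with ◇φ ∉ Γ, then there is a set U of prime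
theories such that (Γ, U) is a segment and φ ∉ Δ for all Δ ∈ U. -/
theorem segment_avoiding_dia (Ax : Set Form) (Γ : Set Form)
    (hΓ : PrimeTheory Ax Γ) (φ : Form) (h : φ.dia ∉ Γ) :
    ∃ U : Set (Set Form), IsSegment Ax Γ U ∧ ∀ Δ ∈ U, φ ∉ Δ := by
  set B : Set Form := {χ | χ.box ∈ Γ} with hB
  refine ⟨{Δ | PrimeTheory Ax Δ ∧ B ⊆ Δ ∧ φ ∉ Δ}, ⟨hΓ, fun Δ hΔ => hΔ.1,
    fun χ hχ Δ hΔ => hΔ.2.1 hχ, ?_⟩, fun Δ hΔ => hΔ.2.2⟩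
  intro ψ hψ
  have hnp : ¬ Prv Ax (insert ψ B) φ := by
    intro hp
    have h1 : Prv Ax B (ψ.imp φ) := deduction hp
    have h2 : Prv Ax Γ ((ψ.imp φ).box) := Prv.boxed h1 (fun χ hχ => Prv.el hχ)
    have hk : Prv Ax Γ (((ψ.imp φ).box).imp ((ψ.dia).imp (φ.dia))) :=
      Prv.ax (Or.inr (Or.inr (Or.inl ⟨ψ, φ, rfl⟩)))
    have : Prv Ax Γ (φ.dia) := Prv.mp (Prv.el hψ) (Prv.mp h2 hk)
    exact h (hΓ.1 _ this)
  obtain ⟨Δ, hsub, hpt, hnφ⟩ := lindenbaum hnp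
  exact ⟨Δ, ⟨hpt, fun χ hχ => hsub (Set.mem_insert_of_mem ψ hχ), hnφ⟩,
    hsub (Set.mem_insert ψ B)⟩
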